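/- Let C be the operator -d²/dy² on C([0,1]) with domain {u ∈ C² : u(0)=0, u'(1)=0}. For every μ ≥ 0 the operator μ + C is invertible on C([0,1]) and there exists a constant c (independent of μ) such that ‖(μ + C)^{-1}‖_{L(C([0,1]))} ≤ c/(1+μ). -/

import Mathlib

open MeasureTheory intervalIntegral

private lemma my_sinh_nonneg {x : ℝ} (hx : 0 ≤ x) : 0 ≤ Real.sinh x := by
  simpa using Real.sinh_le_sinh.mpr hx

private lemma my_sinh_le {x : ℝ} (hx : 0 ≤ x) : Real.sinh x ≤ 2 * x * Real.cosh x := by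
  rw [Real.sinh_eq, Real.cosh_eq]
  have ha : (0:ℝ) < Real.exp x := Real.exp_pos x
  have hb : (0:ℝ) < Real.exp (-x) := Real.exp_pos _
  have hab : Real.exp x * Real.exp (-x) = 1 := by rw [← Real.exp_add]; simp
  have h2 : Real.exp (-(2*x)) = Real.exp (-x) * Real.exp (-x) := by
    rw [← Real.exp_add]; ring_nf
  have h1 : -(2*x) + 1 ≤ Real.exp (-x) * Real.exp (-x) := by
    rw [← h2]; exact Real.add_one_le_exp _
  nlinarith [mul_nonneg hx ha.le, mul_nonneg hx hb.le]

private lemma my_cosh_sub_one_le {s : ℝ} (hs : 0 ≤ s) :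
    Real.cosh s - 1 ≤ 2 * s ^ 2 * Real.cosh s := by
  have h1 : Real.cosh s = Real.cosh (s/2) ^ 2 + Real.sinh (s/2) ^ 2 := by
    have := Real.cosh_two_mul (s/2)
    rw [show 2 * (s/2) = s by ring] at this
    exact this
  have h2 : Real.cosh (s/2) ^ 2 = Real.sinh (s/2) ^ 2 + 1 := Real.cosh_sq _
  have h3 : Real.sinh (s/2) ≤ 2 * (s/2) * Real.cosh (s/2) := my_sinh_le (by linarith)
  have h4 : 0 ≤ Real.sinh (s/2) := my_sinh_nonneg (by linarith)
  have h5 : 1 ≤ Real.cosh (s/2) := Real.one_le_cosh _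
  nlinarith [mul_self_le_mul_self h4 h3, sq_nonneg s, sq_nonneg (Real.sinh (s/2))]

/-- Resolvent estimate `‖(μ + C)⁻¹‖ ≤ c/(1+μ)` for the operator `C = -d²/dy²`
with boundary conditions `u(0)=0`, `u'(1)=0` on `C([0,1])`. -/
theorem resolvent_estimate_mixed_bvp :
    ∃ c > 0, ∀ μ : ℝ, 0 ≤ μ → ∀ f : ℝ → ℝ, Continuous f →
      ∃ u u' : ℝ → ℝ,
        (∀ y ∈ Set.Icc (0:ℝ) 1, HasDerivAt u (u' y) y) ∧
        (∀ y ∈ Set.Icc (0:ℝ) 1, HasDerivAt u' (μ * u y - f y) y) ∧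
        u 0 = 0 ∧ u' 1 = 0 ∧
        ∀ M : ℝ, (∀ τ ∈ Set.Icc (0:ℝ) 1, |f τ| ≤ M) →
          ∀ y ∈ Set.Icc (0:ℝ) 1, |u y| ≤ c / (1 + μ) * M := by
  refine ⟨3, by norm_num, fun μ hμ f hf => ?_⟩
  rcases eq_or_lt_of_le hμ with hμ0 | hμpos
  · -- case μ = 0
    subst hμ0
    set g1 : ℝ → ℝ := fun t => t * f t with hg1_def
    have hg1c : Continuous g1 := continuous_id.mul hf
    have hA : ∀ y : ℝ, HasDerivAt (fun y => ∫ t in (0:ℝ)..y, g1 t) (g1 y) y := fun y =>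
      intervalIntegral.integral_hasDerivAt_right (hg1c.intervalIntegrable _ _)
        (hg1c.stronglyMeasurableAtFilter _ _) hg1c.continuousAt
    have hB : ∀ y : ℝ, HasDerivAt (fun y => ∫ t in (0:ℝ)..y, f t) (f y) y := fun y =>
      intervalIntegral.integral_hasDerivAt_right (hf.intervalIntegrable _ _)
        (hf.stronglyMeasurableAtFilter _ _) hf.continuousAt
    refine ⟨fun y => (∫ t in (0:ℝ)..y, g1 t) +
        y * ((∫ t in (0:ℝ)..1, f t) - ∫ t in (0:ℝ)..y, f t),
      fun y => (∫ t in (0:ℝ)..1, f t) - ∫ t in (0:ℝ)..y, f t, ?_, ?_, ?_, ?_, ?_⟩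
    · intro y _
      have h := (hA y).add ((hasDerivAt_id y).mul ((hasDerivAt_const y (∫ t in (0:ℝ)..1, f t)).sub (hB y)))
      refine h.congr_deriv (Eq.symm ?_)
      simp [hg1_def]
      try ring
    · intro y _
      have h := (hasDerivAt_const y (∫ t in (0:ℝ)..1, f t)).sub (hB y)
      refine h.congr_deriv (Eq.symm ?_)
      ring
    · simp
    · simp
    · intro M hM y hy
      obtain ⟨hy0, hy1⟩ := hy
      have hM0 : 0 ≤ M := le_trans (abs_nonneg _) (hM 0 ⟨le_refl 0, zero_le_one⟩)
      have h1 : |∫ t in (0:ℝ)..y, g1 t| ≤ M := by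
        have := intervalIntegral.norm_integral_le_of_norm_le_const (a := 0) (b := y)
          (C := M) (f := g1) (fun x hx => by
            rw [Set.uIoc_of_le hy0] at hx
            have hx1 : |x| ≤ 1 := by
              rw [abs_of_nonneg hx.1.le]; exact le_trans hx.2 hy1
            calc ‖g1 x‖ = |x| * |f x| := by simp [hg1_def, abs_mul]
              _ ≤ 1 * M := mul_le_mul hx1 (hM x ⟨hx.1.le, le_trans hx.2 hy1⟩)
                  (abs_nonneg _) zero_le_one
              _ = M := one_mul M)
        calc |∫ t in (0:ℝ)..y, g1 t| ≤ M * |y - 0| := this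
          _ ≤ M * 1 := by
              apply mul_le_mul_of_nonneg_left _ hM0
              rw [sub_zero, abs_of_nonneg hy0]; exact hy1
          _ = M := mul_one M
      have hadj : (∫ t in (0:ℝ)..y, f t) + (∫ t in y..(1:ℝ), f t) = ∫ t in (0:ℝ)..1, f t :=
        intervalIntegral.integral_add_adjacent_intervals (hf.intervalIntegrable _ _)
          (hf.intervalIntegrable _ _)
      have h2 : |(∫ t in (0:ℝ)..1, f t) - ∫ t in (0:ℝ)..y, f t| ≤ M := by
        have hrw : (∫ t in (0:ℝ)..1, f t) - (∫ t in (0:ℝ)..y, f t) = ∫ t in y..(1:ℝ), f t := by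
          linarith
        rw [hrw]
        have := intervalIntegral.norm_integral_le_of_norm_le_const (a := y) (b := 1)
          (C := M) (f := f) (fun x hx => by
            rw [Set.uIoc_of_le hy1] at hx
            exact hM x ⟨le_trans hy0 hx.1.le, hx.2⟩)
        calc |∫ t in y..(1:ℝ), f t| ≤ M * |1 - y| := this
          _ ≤ M * 1 := by
              apply mul_le_mul_of_nonneg_left _ hM0
              rw [abs_of_nonneg (by linarith)]; linarith
          _ = M := mul_one M
      calc |(∫ t in (0:ℝ)..y, g1 t) + y * ((∫ t in (0:ℝ)..1, f t) - ∫ t in (0:ℝ)..y, f t)|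
          ≤ |∫ t in (0:ℝ)..y, g1 t| + |y| * |(∫ t in (0:ℝ)..1, f t) - ∫ t in (0:ℝ)..y, f t| := by
            refine (abs_add_le _ _).trans ?_
            rw [abs_mul]
        _ ≤ M + 1 * M := by
            gcongr
            · rw [abs_of_nonneg hy0]; exact hy1
        _ ≤ 3 / (1 + 0) * M := by norm_num; linarith
  · -- case μ > 0
    set s : ℝ := Real.sqrt μ with hs_def
    have hs : 0 < s := Real.sqrt_pos.mpr hμpos
    have hs2 : s ^ 2 = μ := Real.sq_sqrt hμ
    have hcosh : 0 < Real.cosh s := Real.cosh_pos s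
    set g1 : ℝ → ℝ := fun t => Real.sinh (s * t) * f t with hg1_def
    set g2 : ℝ → ℝ := fun t => Real.cosh (s * (1 - t)) * f t with hg2_def
    have hg1c : Continuous g1 :=
      (Real.continuous_sinh.comp (continuous_const.mul continuous_id)).mul hf
    have hg2c : Continuous g2 :=
      (Real.continuous_cosh.comp (continuous_const.mul (continuous_const.sub continuous_id))).mul hf
    set A : ℝ → ℝ := fun y => ∫ t in (0:ℝ)..y, g1 t with hA_def
    set B : ℝ → ℝ := fun y => (∫ t in (0:ℝ)..1, g2 t) - ∫ t in (0:ℝ)..y, g2 t with hB_def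
    have hA : ∀ y : ℝ, HasDerivAt A (g1 y) y := fun y =>
      intervalIntegral.integral_hasDerivAt_right (hg1c.intervalIntegrable _ _)
        (hg1c.stronglyMeasurableAtFilter _ _) hg1c.continuousAt
    have hB : ∀ y : ℝ, HasDerivAt B (0 - g2 y) y := fun y =>
      (hasDerivAt_const y ((∫ t in (0:ℝ)..1, g2 t))).sub
        (intervalIntegral.integral_hasDerivAt_right (hg2c.intervalIntegrable _ _)
          (hg2c.stronglyMeasurableAtFilter _ _) hg2c.continuousAt)
    -- inner functions
    have hin1 : ∀ y : ℝ, HasDerivAt (fun y : ℝ => s * (1 - y)) (s * -1) y := fun y => by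
      have h := ((hasDerivAt_const y (1:ℝ)).sub (hasDerivAt_id y)).const_mul s
      refine h.congr_deriv (Eq.symm ?_)
      ring
    have hin2 : ∀ y : ℝ, HasDerivAt (fun y : ℝ => s * y) (s * 1) y := fun y =>
      (hasDerivAt_id y).const_mul s
    have hC1 : ∀ y : ℝ, HasDerivAt (fun y => Real.cosh (s * (1 - y)))
        (Real.sinh (s * (1 - y)) * (s * -1)) y := fun y =>
      ((Real.hasDerivAt_cosh (s * (1 - y))).comp y (hin1 y) :)
    have hS1 : ∀ y : ℝ, HasDerivAt (fun y => Real.sinh (s * (1 - y)))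
        (Real.cosh (s * (1 - y)) * (s * -1)) y := fun y =>
      ((Real.hasDerivAt_sinh (s * (1 - y))).comp y (hin1 y) :)
    have hCy : ∀ y : ℝ, HasDerivAt (fun y => Real.cosh (s * y))
        (Real.sinh (s * y) * (s * 1)) y := fun y =>
      (Real.hasDerivAt_cosh (s * y)).comp y (hin2 y)
    have hSy : ∀ y : ℝ, HasDerivAt (fun y => Real.sinh (s * y))
        (Real.cosh (s * y) * (s * 1)) y := fun y =>
      (Real.hasDerivAt_sinh (s * y)).comp y (hin2 y)
    have key : ∀ y : ℝ, Real.cosh (s * (1 - y)) * Real.cosh (s * y)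
        + Real.sinh (s * (1 - y)) * Real.sinh (s * y) = Real.cosh s := fun y => by
      have h := Real.cosh_add (s * (1 - y)) (s * y)
      rw [show s * (1 - y) + s * y = s by ring] at h
      linarith
    refine ⟨fun y => (Real.cosh (s * (1 - y)) * A y + Real.sinh (s * y) * B y)
        / (s * Real.cosh s),
      fun y => (Real.cosh (s * y) * B y - Real.sinh (s * (1 - y)) * A y) / Real.cosh s,
      ?_, ?_, ?_, ?_, ?_⟩
    · intro y _
      have h := (((hC1 y).mul (hA y)).add ((hSy y).mul (hB y))).div_const (s * Real.cosh s)
      refine h.congr_deriv (Eq.symm ?_)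
      simp only [hg1_def, hg2_def]
      field_simp
      ring
    · intro y _
      have h := (((hCy y).mul (hB y)).sub ((hS1 y).mul (hA y))).div_const (Real.cosh s)
      refine h.congr_deriv (Eq.symm ?_)
      have hk := key y
      simp only [hg1_def, hg2_def]
      rw [← hs2]
      field_simp
      linear_combination (f y) * hk
    · simp [hA_def]
    · simp [hB_def]
    · intro M hM y hy
      obtain ⟨hy0, hy1⟩ := hy
      have hM0 : 0 ≤ M := le_trans (abs_nonneg _) (hM 0 ⟨le_refl 0, zero_le_one⟩)
      have hsy : (0:ℝ) ≤ s * y := mul_nonneg hs.le hy0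
      have hs1y : (0:ℝ) ≤ s * (1 - y) := mul_nonneg hs.le (by linarith)
      -- bound on A y
      have hAb : |A y| ≤ (Real.cosh (s * y) - 1) / s * M := by
        have hcont : Continuous (fun t : ℝ => Real.sinh (s * t) * M) :=
          (Real.continuous_sinh.comp (continuous_const.mul continuous_id)).mul continuous_const
        have hFd : ∀ t ∈ Set.uIcc (0:ℝ) y,
            HasDerivAt (fun t => Real.cosh (s * t) / s * M) (Real.sinh (s * t) * M) t := by
          intro t _
          have h := (((Real.hasDerivAt_cosh (s * t)).comp t (hin2 t)).div_const s).mul_const M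
          refine h.congr_deriv (Eq.symm ?_)
          field_simp
        have hint : (∫ t in (0:ℝ)..y, Real.sinh (s * t) * M)
            = (Real.cosh (s * y) - 1) / s * M := by
          rw [intervalIntegral.integral_eq_sub_of_hasDerivAt hFd (hcont.intervalIntegrable _ _)]
          rw [mul_zero, Real.cosh_zero]
          field_simp
        calc |A y| ≤ ∫ t in (0:ℝ)..y, |g1 t| :=
              intervalIntegral.abs_integral_le_integral_abs hy0
          _ ≤ ∫ t in (0:ℝ)..y, Real.sinh (s * t) * M := by
              refine intervalIntegral.integral_mono_on hy0
                (hg1c.abs.intervalIntegrable _ _) (hcont.intervalIntegrable _ _) ?_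
              intro t ht
              have hst : 0 ≤ Real.sinh (s * t) := my_sinh_nonneg (mul_nonneg hs.le ht.1)
              calc |g1 t| = Real.sinh (s * t) * |f t| := by
                    rw [hg1_def]; rw [abs_mul, abs_of_nonneg hst]
                _ ≤ Real.sinh (s * t) * M :=
                    mul_le_mul_of_nonneg_left (hM t ⟨ht.1, le_trans ht.2 hy1⟩) hst
          _ = (Real.cosh (s * y) - 1) / s * M := hint
      -- bound on B y
      have hBy : B y = ∫ t in y..(1:ℝ), g2 t := by
        have hadj := intervalIntegral.integral_add_adjacent_intervals
          (hg2c.intervalIntegrable (μ := MeasureTheory.volume) 0 y)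
          (hg2c.intervalIntegrable y 1)
        simp only [hB_def]
        linarith
      have hBb : |B y| ≤ Real.sinh (s * (1 - y)) / s * M := by
        have hcont : Continuous (fun t : ℝ => Real.cosh (s * (1 - t)) * M) :=
          (Real.continuous_cosh.comp
            (continuous_const.mul (continuous_const.sub continuous_id))).mul continuous_const
        have hFd : ∀ t ∈ Set.uIcc y (1:ℝ),
            HasDerivAt (fun t => -(Real.sinh (s * (1 - t))) / s * M)
              (Real.cosh (s * (1 - t)) * M) t := by
          intro t _
          have h := ((((Real.hasDerivAt_sinh (s * (1 - t))).comp t (hin1 t)).neg).div_const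
            s).mul_const M
          refine h.congr_deriv (Eq.symm ?_)
          field_simp
        have hint : (∫ t in y..(1:ℝ), Real.cosh (s * (1 - t)) * M)
            = Real.sinh (s * (1 - y)) / s * M := by
          rw [intervalIntegral.integral_eq_sub_of_hasDerivAt hFd (hcont.intervalIntegrable _ _)]
          rw [show s * (1 - (1:ℝ)) = 0 by ring, Real.sinh_zero]
          field_simp
          ring
        rw [hBy]
        calc |∫ t in y..(1:ℝ), g2 t| ≤ ∫ t in y..(1:ℝ), |g2 t| :=
              intervalIntegral.abs_integral_le_integral_abs hy1
          _ ≤ ∫ t in y..(1:ℝ), Real.cosh (s * (1 - t)) * M := by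
              refine intervalIntegral.integral_mono_on hy1
                (hg2c.abs.intervalIntegrable _ _) (hcont.intervalIntegrable _ _) ?_
              intro t ht
              have hct : 0 ≤ Real.cosh (s * (1 - t)) := (Real.cosh_pos _).le
              calc |g2 t| = Real.cosh (s * (1 - t)) * |f t| := by
                    rw [hg2_def]; rw [abs_mul, abs_of_nonneg hct]
                _ ≤ Real.cosh (s * (1 - t)) * M :=
                    mul_le_mul_of_nonneg_left (hM t ⟨le_trans hy0 ht.1, ht.2⟩) hct
          _ = Real.sinh (s * (1 - y)) / s * M := hint
      -- combine
      have hc1y : (0:ℝ) < Real.cosh (s * (1 - y)) := Real.cosh_pos _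
      have hsy0 : (0:ℝ) ≤ Real.sinh (s * y) := my_sinh_nonneg hsy
      have hs1y0 : (0:ℝ) ≤ Real.sinh (s * (1 - y)) := my_sinh_nonneg hs1y
      have hnum : |Real.cosh (s * (1 - y)) * A y + Real.sinh (s * y) * B y|
          ≤ (Real.cosh s - Real.cosh (s * (1 - y))) / s * M := by
        calc |Real.cosh (s * (1 - y)) * A y + Real.sinh (s * y) * B y|
            ≤ Real.cosh (s * (1 - y)) * |A y| + Real.sinh (s * y) * |B y| := by
              refine (abs_add_le _ _).trans ?_
              rw [abs_mul, abs_mul, abs_of_nonneg hc1y.le, abs_of_nonneg hsy0]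
          _ ≤ Real.cosh (s * (1 - y)) * ((Real.cosh (s * y) - 1) / s * M)
              + Real.sinh (s * y) * (Real.sinh (s * (1 - y)) / s * M) := by
              gcongr
          _ = (Real.cosh (s * (1 - y)) * Real.cosh (s * y)
              + Real.sinh (s * (1 - y)) * Real.sinh (s * y)
              - Real.cosh (s * (1 - y))) / s * M := by ring
          _ = (Real.cosh s - Real.cosh (s * (1 - y))) / s * M := by rw [key y]
      have habs : |(Real.cosh (s * (1 - y)) * A y + Real.sinh (s * y) * B y)
          / (s * Real.cosh s)|
          ≤ ((Real.cosh s - Real.cosh (s * (1 - y))) / s * M) / (s * Real.cosh s) := by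
        rw [abs_div, abs_of_pos (by positivity : (0:ℝ) < s * Real.cosh s)]
        exact div_le_div_of_nonneg_right hnum (by positivity)
      refine habs.trans ?_
      have h1c : (1:ℝ) ≤ Real.cosh (s * (1 - y)) := Real.one_le_cosh _
      have step1 : ((Real.cosh s - Real.cosh (s * (1 - y))) / s * M) / (s * Real.cosh s)
          ≤ ((Real.cosh s - 1) / s * M) / (s * Real.cosh s) :=
        div_le_div_of_nonneg_right
          (mul_le_mul_of_nonneg_right
            (div_le_div_of_nonneg_right (by linarith) hs.le) hM0) (by positivity)
      refine step1.trans ?_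
      have heq : ((Real.cosh s - 1) / s * M) / (s * Real.cosh s)
          = (Real.cosh s - 1) / (s * (s * Real.cosh s)) * M := by
        rw [div_mul_eq_mul_div, div_div]; ring
      rw [heq, ← hs2]
      have hfin : (Real.cosh s - 1) / (s * (s * Real.cosh s)) ≤ 3 / (1 + s ^ 2) := by
        rw [div_le_div_iff₀ (by positivity) (by positivity)]
        nlinarith [my_cosh_sub_one_le hs.le, Real.one_le_cosh s, sq_nonneg s,
          mul_nonneg (sq_nonneg s) hcosh.le]
      exact mul_le_mul_of_nonneg_right hfin hM0
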